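/- Let α ∈ (0,1], K > 0, and let H : S_+ → (0,∞) be continuous. Let 𝒥 be the set of continuous functions g : S_+ × ℝ → [0,∞) such that: (1) sup_{u∈S_+} g(u,0)H(u) ≤ K; (2) t ↦ g(u,t)e^{αt} is nondecreasing for every u ∈ S_+; (3) t ↦ g(u,t)e^{(α−1)t} is nonincreasing for every u ∈ S_+; (4) for each t ∈ ℝ the map u ↦ g(u,t)e^{αt}H(u) is α-Hölder continuous with constant (max(1,e^t))·K. Then 𝒥 is a compact subset of C(S_+ × ℝ) with respect to the topology of uniform convergence on compact sets. -/

import Mathlib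

open MeasureTheory ProbabilityTheory Filter Set
open scoped ENNReal NNReal Topology

noncomputable section

namespace MST

/-- Vectors in `ℝ^d`. -/
abbrev Vec (d : ℕ) := Fin d → ℝ

/-- Nonnegative `d × d` matrices live in the space of all real `d × d` matrices. -/
abbrev Mat (d : ℕ) := Matrix (Fin d) (Fin d) ℝ

instance (d : ℕ) : MeasurableSpace (Mat d) :=
  (inferInstance : MeasurableSpace (Fin d → Fin d → ℝ))

/-- The space in which the random element `T = (Q, (T_i)_{i ≥ 1})` takes its values. -/
abbrev TType (d : ℕ) := Vec d × (ℕ → Mat d)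

/-- Nodes of the Ulam--Harris tree. -/
abbrev TreeIdx := List ℕ

variable (d : ℕ)

/-- The Euclidean norm on `ℝ^d`. -/
def enorm (x : Vec d) : ℝ := Real.sqrt (∑ i, (x i) ^ 2)

/-- The standard inner product on `ℝ^d`. -/
def inp (x y : Vec d) : ℝ := ∑ i, x i * y i

/-- The vector `𝟙 = (1, …, 1)ᵀ`. -/
def ones : Vec d := fun _ => 1

/-- Operator norm of a matrix, induced by the Euclidean norm. -/
def opNorm (a : Mat d) : ℝ :=
  sSup ((fun x => enorm d (a.mulVec x)) '' {x | enorm d x = 1})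

/-- `S₊`, the intersection of the unit sphere with the nonnegative cone. -/
def Sp : Set (Vec d) := {x | (∀ i, 0 ≤ x i) ∧ enorm d x = 1}

/-- The interior of `S₊` (unit vectors with all coordinates positive). -/
def SpInt : Set (Vec d) := {x | (∀ i, 0 < x i) ∧ enorm d x = 1}

/-- `ι(a) = inf_{x ∈ S₊} |a x|`. -/
def iota (a : Mat d) : ℝ := sInf ((fun x => enorm d (a.mulVec x)) '' Sp d)

/-- Normalization `x ↦ x/|x|`. -/
def nrmlz (x : Vec d) : Vec d := (enorm d x)⁻¹ • x

/-- A matrix is allowable if it has no zero row and no zero column. -/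
def allowable (a : Mat d) : Prop := (∀ i, ∃ j, a i j ≠ 0) ∧ (∀ j, ∃ i, a i j ≠ 0)

/-- A matrix is (entrywise) positive if all its entries are positive. -/
def entrywisePos (a : Mat d) : Prop := ∀ i j, 0 < a i j

/-- A matrix is nonnegative if all its entries are nonnegative. -/
def nonnegMat (a : Mat d) : Prop := ∀ i j, 0 ≤ a i j

/-- Topological support of a measure on matrices. -/
def msupport (μm : Measure (Mat d)) : Set (Mat d) :=
  {a | ∀ U : Set (Mat d), IsOpen U → a ∈ U → 0 < μm U}

/-- The subsemigroup `[supp μ]` generated by the support of `μ`. -/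
def suppSemigroup (μm : Measure (Mat d)) : Set (Mat d) :=
  (Subsemigroup.closure (msupport d μm) : Subsemigroup (Mat d))

/-- Branch weights: `L(∅) = Id`, `L(vi) = L(v) T_i(v)`. -/
def bw {Ω : Type} (Tfam : TreeIdx → Ω → TType d) (v : TreeIdx) (ω : Ω) : Mat d :=
  ((List.range v.length).map fun k => ((Tfam (v.take k) ω).2 (v.getD k 0))).prod

/-- The basic data of the weighted branching model: an i.i.d. family `(T(v))_{v}` of copies
of `T = (Q, (T_i)_{i≥1})` indexed by the Ulam--Harris tree, together with the number `N` of
nonzero weights at the root. -/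
structure Setup (d : ℕ) (Ω : Type) [MeasurableSpace Ω] (P : Measure Ω) : Type where
  Tfam : TreeIdx → Ω → TType d
  Nf : Ω → ℕ
  meas_T : ∀ v, Measurable (Tfam v)
  meas_N : Measurable Nf
  ident : ∀ v, Measure.map (Tfam v) P = Measure.map (Tfam []) P
  indep : iIndepFun Tfam P

variable {Ω : Type} [MeasurableSpace Ω] {P : Measure Ω}

/-- `E N`. -/
def ENn (S : Setup d Ω P) : ℝ≥0∞ := ∫⁻ ω, (S.Nf ω : ℝ≥0∞) ∂P

/-- (A0): the weights and the immigration term are nonnegative. -/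
def A0 (S : Setup d Ω P) : Prop :=
  ∀ᵐ ω ∂P, (∀ i, 0 ≤ (S.Tfam [] ω).1 i) ∧ ∀ k, nonnegMat d ((S.Tfam [] ω).2 k)

/-- (A1): `T_i ≠ 0` exactly for `i < N`, `N` finite. -/
def A1 (S : Setup d Ω P) : Prop := ∀ᵐ ω ∂P, ∀ i, ((S.Tfam [] ω).2 i ≠ 0 ↔ i < S.Nf ω)

/-- (A2): `N ≥ 1` a.s. and `1 < E N < ∞`. -/
def A2 (S : Setup d Ω P) : Prop :=
  (∀ᵐ ω ∂P, 1 ≤ S.Nf ω) ∧ 1 < ENn d S ∧ ENn d S < ∞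

/-- The measure `μ` on matrices, `∫ f dμ = (E N)⁻¹ E[Σ_{i<N} f(T_i)]`. -/
def muM (S : Setup d Ω P) : Measure (Mat d) :=
  (ENn d S)⁻¹ •
    Measure.sum fun i : ℕ =>
      Measure.map (fun ω => (S.Tfam [] ω).2 i) (P.restrict {ω | i < S.Nf ω})

/-- `m(s) = E N · lim_n (E ‖M_n ⋯ M_1‖^s)^{1/n}`, as an extended real number. -/
def mfun (S : Setup d Ω P) (s : ℝ) : ℝ≥0∞ :=
  ENn d S *
    Filter.limsup (fun n : ℕ =>
      (∫⁻ a : Fin n → Mat d,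
          ENNReal.ofReal ((opNorm d (List.ofFn fun k => a k).prod) ^ s)
          ∂(Measure.pi fun _ => muM d S)) ^ ((n : ℝ)⁻¹)) atTop

/-- `I_μ = {s ≥ 0 : m(s) < ∞}`. -/
def Imu (S : Setup d Ω P) : Set ℝ := {s | 0 ≤ s ∧ mfun d S s < ∞}

/-- `m` as a real-valued function (on `I_μ`). -/
def mReal (S : Setup d Ω P) (s : ℝ) : ℝ := (mfun d S s).toReal

/-- (A3): the semigroup generated by `supp μ` consists of allowable matrices and
contains a positive one. -/
def A3 (S : Setup d Ω P) : Prop :=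
  (∀ a ∈ suppSemigroup d (muM d S), allowable d a) ∧
    ∃ a ∈ suppSemigroup d (muM d S), entrywisePos d a

/-- (A4): the additive group generated by the logarithms of the Perron--Frobenius
eigenvalues of the positive matrices in `[supp μ]` is dense in `ℝ`. -/
def A4 (S : Setup d Ω P) : Prop :=
  Dense (AddSubgroup.closure
    {t : ℝ | ∃ a ∈ suppSemigroup d (muM d S), entrywisePos d a ∧
      ∃ r : ℝ, 0 < r ∧ t = Real.log r ∧
        ∃ x : Vec d, (∀ i, 0 < x i) ∧ a.mulVec x = r • x} : Set ℝ)

/-- (A5): `α ∈ (0,1]` lies in the interior of `I_μ` and `m(α) = 1`. -/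
def A5 (S : Setup d Ω P) (α : ℝ) : Prop :=
  0 < α ∧ α ≤ 1 ∧ α ∈ interior (Imu d S) ∧ mfun d S α = 1

/-- (A6). -/
def A6 (S : Setup d Ω P) (α : ℝ) : Prop :=
  (∫⁻ a, ENNReal.ofReal ((opNorm d a) ^ α * Real.log (1 + opNorm d a)) ∂(muM d S) < ∞) ∧
    (∫⁻ a, ENNReal.ofReal ((opNorm d a) ^ α * |Real.log (iota d (Matrix.transpose a))|)
        ∂(muM d S) < ∞)

/-- (A6a). -/
def A6a (S : Setup d Ω P) (α : ℝ) : Prop :=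
  (∫⁻ a, ENNReal.ofReal ((opNorm d a) ^ α * Real.log (1 + opNorm d a)) ∂(muM d S) < ∞) ∧
    (∫⁻ a, ENNReal.ofReal ((1 + opNorm d a) ^ α * |Real.log (iota d (Matrix.transpose a))|)
        ∂(muM d S) < ∞)

/-- (A7): `E ‖M‖ < ∞`. -/
def A7 (S : Setup d Ω P) : Prop := ∫⁻ a, ENNReal.ofReal (opNorm d a) ∂(muM d S) < ∞

/-- (A8): `0 < E |Q|^{α+ε} < ∞` for some `ε > 0`. -/
def A8 (S : Setup d Ω P) (α : ℝ) : Prop :=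
  ∃ ε > (0 : ℝ),
    0 < ∫⁻ ω, ENNReal.ofReal ((enorm d (S.Tfam [] ω).1) ^ (α + ε)) ∂P ∧
      ∫⁻ ω, ENNReal.ofReal ((enorm d (S.Tfam [] ω).1) ^ (α + ε)) ∂P < ∞

/-- `H^s(x) = ∫ ⟨x,y⟩^s ν(dy)`. -/
def Hfun (νa : Measure (Vec d)) (α : ℝ) (x : Vec d) : ℝ := ∫ y, (inp d x y) ^ α ∂νa

/-- `ν^α`, the eigenmeasure on `S₊` with eigenvalue `(E N)⁻¹ m(α)`. -/
def IsNuAlpha (S : Setup d Ω P) (α : ℝ) (νa : Measure (Vec d)) : Prop :=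
  IsProbabilityMeasure νa ∧ νa (Sp d)ᶜ = 0 ∧
    ∀ f : Vec d → ℝ, Continuous f →
      (∫ x, ∫ a, (enorm d (a.mulVec x)) ^ α * f (nrmlz d (a.mulVec x)) ∂(muM d S) ∂νa)
        = ((ENn d S).toReal)⁻¹ * mReal d S α * ∫ x, f x ∂νa

/-- The martingale `W_n(u) = Σ_{|v|=n} H^α(L(v)ᵀ u)`. -/
def Wn (S : Setup d Ω P) (νa : Measure (Vec d)) (α : ℝ) (n : ℕ) (u : Vec d) (ω : Ω) : ℝ :=
  ∑' v : {v : TreeIdx // v.length = n},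
    Hfun d νa α ((Matrix.transpose (bw d S.Tfam v ω)).mulVec u)

/-- The summands of `W* = Σ_v L(v) Q(v)`. -/
def WstarTerm (S : Setup d Ω P) (v : TreeIdx) (ω : Ω) : Vec d :=
  (bw d S.Tfam v ω).mulVec ((S.Tfam v ω).1)

/-- `W* = Σ_{n≥0} Σ_{|v|=n} L(v) Q(v)`. -/
def Wstar (S : Setup d Ω P) (ω : Ω) : Vec d := ∑' v : TreeIdx, WstarTerm d S v ω

/-- Laplace transform of a (probability) measure on `ℝ^d_{≥0}`. -/
def laplace (η : Measure (Vec d)) (x : Vec d) : ℝ := ∫ z, Real.exp (-(inp d x z)) ∂η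

/-- `η` is (the law of) a fixed point of the homogeneous multivariate smoothing transform
with weight law `τ`: on some probability space there are `T' ∼ τ` and an i.i.d. sequence
`(X_i) ∼ η`, independent of `T'`, with `Σ_{i<N'} T'_i X_i ∼ η`. -/
def IsFPhom (τ : Measure (TType d)) (η : Measure (Vec d)) : Prop :=
  IsProbabilityMeasure η ∧ (∀ᵐ x ∂η, ∀ i, 0 ≤ x i) ∧
    ∃ (Ω' : Type) (_ : MeasurableSpace Ω') (P' : Measure Ω') (_ : IsProbabilityMeasure P')
      (T' : Ω' → TType d) (X' : ℕ → Ω' → Vec d) (N' : Ω' → ℕ),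
      Measurable T' ∧ (∀ i, Measurable (X' i)) ∧ Measurable N' ∧
        Measure.map T' P' = τ ∧ (∀ i, Measure.map (X' i) P' = η) ∧
        iIndepFun X' P' ∧
        IndepFun T' (fun ω i => X' i ω) P' ∧
        (∀ᵐ ω ∂P', ∀ i, ((T' ω).2 i ≠ 0 ↔ i < N' ω)) ∧
        Measure.map (fun ω => ∑ i ∈ Finset.range (N' ω), ((T' ω).2 i).mulVec (X' i ω)) P'
          = η

/-- `η` is (the law of) a fixed point of the inhomogeneous multivariate smoothing transform. -/
def IsFPinhom (τ : Measure (TType d)) (η : Measure (Vec d)) : Prop :=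
  IsProbabilityMeasure η ∧ (∀ᵐ x ∂η, ∀ i, 0 ≤ x i) ∧
    ∃ (Ω' : Type) (_ : MeasurableSpace Ω') (P' : Measure Ω') (_ : IsProbabilityMeasure P')
      (T' : Ω' → TType d) (X' : ℕ → Ω' → Vec d) (N' : Ω' → ℕ),
      Measurable T' ∧ (∀ i, Measurable (X' i)) ∧ Measurable N' ∧
        Measure.map T' P' = τ ∧ (∀ i, Measure.map (X' i) P' = η) ∧
        iIndepFun X' P' ∧
        IndepFun T' (fun ω i => X' i ω) P' ∧
        (∀ᵐ ω ∂P', ∀ i, ((T' ω).2 i ≠ 0 ↔ i < N' ω)) ∧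
        Measure.map
          (fun ω => (∑ i ∈ Finset.range (N' ω), ((T' ω).2 i).mulVec (X' i ω)) + (T' ω).1) P'
          = η

/-- `S^u(v) = -log |L(v)ᵀ u|`. -/
def Su (S : Setup d Ω P) (u : Vec d) (v : TreeIdx) (ω : Ω) : ℝ :=
  -Real.log (enorm d ((Matrix.transpose (bw d S.Tfam v ω)).mulVec u))

/-- `U^u(v) = L(v)ᵀ u / |L(v)ᵀ u|`. -/
def Uu (S : Setup d Ω P) (u : Vec d) (v : TreeIdx) (ω : Ω) : Vec d :=
  nrmlz d ((Matrix.transpose (bw d S.Tfam v ω)).mulVec u)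

/-- Membership in the stopping line `J^u_t`. -/
def inJ (S : Setup d Ω P) (u : Vec d) (t : ℝ) (v : TreeIdx) (ω : Ω) : Prop :=
  t < Su d S u v ω ∧ ∀ k < v.length, Su d S u (v.take k) ω ≤ t

/-- `v` has no ancestor (including itself) in the stopping line `J^u_t`. -/
def noAncJ (S : Setup d Ω P) (u : Vec d) (t : ℝ) (v : TreeIdx) (ω : Ω) : Prop :=
  ∀ k ≤ v.length, ¬ inJ d S u t (v.take k) ω

/-- The pre-`J^u_t` σ-algebra `B_{J^u_t} = σ(T(v) : v has no ancestor in J^u_t)`. -/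
def BJ (S : Setup d Ω P) (u : Vec d) (t : ℝ) : MeasurableSpace Ω :=
  MeasurableSpace.generateFrom
    {A | ∃ (v : TreeIdx) (B : Set (TType d)), MeasurableSet B ∧
      A = {ω | noAncJ d S u t v ω ∧ S.Tfam v ω ∈ B}}

/-- `W_{J^u_t}(u) = Σ_{v ∈ J^u_t} H^α(L(v)ᵀ u)`. -/
def WJ (S : Setup d Ω P) (νa : Measure (Vec d)) (α : ℝ) (u : Vec d) (t : ℝ) (ω : Ω) : ℝ :=
  ∑' v : TreeIdx,
    Set.indicator {ω' | inJ d S u t v ω'}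
      (fun ω' => Hfun d νa α ((Matrix.transpose (bw d S.Tfam v ω')).mulVec u)) ω

/-- `W^f_{J^u_t}(u) = Σ_{v ∈ J^u_t} H^α(L(v)ᵀ u) f(U^u(v), S^u(v) - t)`. -/
def WfJ (S : Setup d Ω P) (νa : Measure (Vec d)) (α : ℝ) (u : Vec d) (t : ℝ)
    (f : Vec d × ℝ → ℝ) (ω : Ω) : ℝ :=
  ∑' v : TreeIdx,
    Set.indicator {ω' | inJ d S u t v ω'}
      (fun ω' => Hfun d νa α ((Matrix.transpose (bw d S.Tfam v ω')).mulVec u) *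
        f (Uu d S u v ω', Su d S u v ω' - t)) ω

/-- A positive function is slowly varying at `0`. -/
def SlowVary0 (L : ℝ → ℝ) : Prop :=
  (∀ t : ℝ, 0 < t → 0 < L t) ∧
    ∀ c : ℝ, 0 < c → Tendsto (fun t => L (c * t) / L t) (nhdsWithin 0 (Ioi 0)) (nhds 1)

/-- `φ` is `L`-`α`-regular: `0 < liminf_{r→0} (1-φ(r𝟙))/(L(r)r^α) ≤ limsup < ∞`. -/
def LAlphaRegular (φ : Vec d → ℝ) (L : ℝ → ℝ) (α : ℝ) : Prop :=
  ∃ c C : ℝ, 0 < c ∧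
    ∀ᶠ r in nhdsWithin (0:ℝ) (Ioi 0),
      c ≤ (1 - φ (r • ones d)) / (L r * r ^ α) ∧ (1 - φ (r • ones d)) / (L r * r ^ α) ≤ C

/-- `φ` is `L`-`α`-elementary: `lim_{r→0} (1-φ(r𝟙))/(L(r)r^α)` exists in `(0,∞)`. -/
def LAlphaElementary (φ : Vec d → ℝ) (L : ℝ → ℝ) (α : ℝ) : Prop :=
  ∃ K : ℝ, 0 < K ∧
    Tendsto (fun r => (1 - φ (r • ones d)) / (L r * r ^ α)) (nhdsWithin (0:ℝ) (Ioi 0)) (nhds K)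

/-- `α`-regular (`L ≡ 1`). -/
def AlphaRegular (φ : Vec d → ℝ) (α : ℝ) : Prop := LAlphaRegular d φ (fun _ => 1) α


/-- `D(x) = (1 - φ(x)) / H(x)` for the Laplace transform `φ` of `ρ`. -/
def Dfun (ρ νm : Measure (Vec d)) (α : ℝ) (x : Vec d) : ℝ :=
  (1 - laplace d ρ x) / Hfun d νm α x

section Lemma86

variable {d}
variable {α K h₀ : ℝ} {H : ↥(Sp d) → ℝ} {f : ↥(Sp d) × ℝ → ℝ}

lemma continuous_enorm : Continuous (enorm d) :=
  Real.continuous_sqrt.comp (continuous_finset_sum _ fun i _ => (continuous_apply i).pow 2)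

lemma isCompact_Sp : IsCompact (Sp d) := by
  have hclosed : IsClosed (Sp d) := by
    have h1 : IsClosed {x : Vec d | ∀ i, 0 ≤ x i} := by
      rw [Set.setOf_forall]
      exact isClosed_iInter fun i => isClosed_le continuous_const (continuous_apply i)
    have h2 : IsClosed {x : Vec d | enorm d x = 1} :=
      isClosed_eq continuous_enorm continuous_const
    exact h1.inter h2
  have hbdd : Sp d ⊆ Metric.closedBall 0 1 := by
    intro x hx
    rw [Metric.mem_closedBall, dist_zero_right]
    rw [pi_norm_le_iff_of_nonneg zero_le_one]
    intro i
    have h0 : (0:ℝ) ≤ ∑ j, (x j)^2 := Finset.sum_nonneg fun j _ => sq_nonneg _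
    have hsum : ∑ j, (x j)^2 = 1 := by
      have h := hx.2
      unfold enorm at h
      nlinarith [Real.sq_sqrt h0]
    have hle : (x i)^2 ≤ 1 :=
      hsum ▸ Finset.single_le_sum (fun j _ => sq_nonneg (x j)) (Finset.mem_univ i)
    have : |x i| ≤ 1 := by
      rw [← Real.sqrt_one, ← Real.sqrt_sq_eq_abs]
      exact Real.sqrt_le_sqrt hle
    simpa using this
  exact (isCompact_closedBall (0 : Vec d) 1).of_isClosed_subset hclosed hbdd

lemma Sp_nonempty (hd : 1 ≤ d) : (Sp d).Nonempty := by
  refine ⟨fun i => if i = ⟨0, hd⟩ then 1 else 0, fun i => by dsimp only; split <;> norm_num, ?_⟩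
  unfold enorm
  have h : ∀ i : Fin d, ((if i = (⟨0,hd⟩ : Fin d) then (1:ℝ) else 0))^2
      = if i = (⟨0,hd⟩ : Fin d) then (1:ℝ) else 0 := fun i => by split <;> norm_num
  rw [Finset.sum_congr rfl fun i _ => h i]
  simp


lemma exp_shift {a b c : ℝ} (h : a * Real.exp c ≤ b) : a ≤ b * Real.exp (-c) := by
  have h2 := mul_le_mul_of_nonneg_right h (Real.exp_pos (-c)).le
  rwa [mul_assoc, ← Real.exp_add, add_neg_cancel, Real.exp_zero, mul_one] at h2

lemma exp_shift' {a b c e : ℝ} (h : a * Real.exp c ≤ b * Real.exp e) :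
    a * Real.exp (c - e) ≤ b := by
  have h2 := mul_le_mul_of_nonneg_right h (Real.exp_pos (-e)).le
  rwa [mul_assoc, mul_assoc, ← Real.exp_add, ← Real.exp_add, add_neg_cancel, Real.exp_zero,
    mul_one, ← sub_eq_add_neg] at h2

lemma exp_aux (hα : 0 < α) (hα1 : α ≤ 1) (t : ℝ) :
    max 1 (Real.exp t) * Real.exp (-(α * t)) ≤ Real.exp |t| := by
  rw [max_mul_of_nonneg _ _ (Real.exp_pos _).le, one_mul, ← Real.exp_add]
  apply max_le <;> refine Real.exp_le_exp.2 ?_ <;>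
    nlinarith [le_abs_self t, neg_abs_le t, abs_nonneg t,
      mul_nonneg hα.le (show (0:ℝ) ≤ t + |t| by linarith [neg_abs_le t]),
      mul_nonneg (show (0:ℝ) ≤ 1 - α by linarith) (show (0:ℝ) ≤ |t| - t by linarith [le_abs_self t]),
      mul_nonneg (show (0:ℝ) ≤ 1 - α by linarith) (abs_nonneg t)]

lemma pred_bound (hα : 0 < α) (hα1 : α ≤ 1)
    (hh₀ : 0 < h₀) (hH : ∀ u, h₀ ≤ H u)
    (hfnn : ∀ p, 0 ≤ f p)
    (hfK : ∀ u, f (u, 0) * H u ≤ K)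
    (hmon : ∀ u, Monotone fun t : ℝ => f (u, t) * Real.exp (α * t))
    (hant : ∀ u, Antitone fun t : ℝ => f (u, t) * Real.exp ((α - 1) * t))
    (u : ↥(Sp d)) (t : ℝ) : f (u, t) ≤ K / h₀ * Real.exp |t| := by
  have hb1 : f (u, 0) ≤ K / h₀ := by
    rw [le_div_iff₀ hh₀]
    calc f (u, 0) * h₀ ≤ f (u, 0) * H u := mul_le_mul_of_nonneg_left (hH u) (hfnn _)
      _ ≤ K := hfK u
  have hK0 : 0 ≤ K / h₀ := le_trans (hfnn (u, 0)) hb1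
  rcases le_total t 0 with ht | ht
  · have h1 := hmon u ht
    simp only [mul_zero, Real.exp_zero, mul_one] at h1
    have h2 : f (u, t) ≤ f (u, 0) * Real.exp (-(α * t)) := exp_shift h1
    refine h2.trans (mul_le_mul hb1 (Real.exp_le_exp.2 ?_) (Real.exp_pos _).le hK0)
    nlinarith [mul_nonneg (show (0:ℝ) ≤ 1 - α by linarith) (show (0:ℝ) ≤ -t by linarith),
      abs_of_nonpos ht]
  · have h1 := hant u ht
    simp only [mul_zero, Real.exp_zero, mul_one] at h1
    have h2 : f (u, t) ≤ f (u, 0) * Real.exp (-((α - 1) * t)) := exp_shift h1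
    refine h2.trans (mul_le_mul hb1 (Real.exp_le_exp.2 ?_) (Real.exp_pos _).le hK0)
    nlinarith [mul_nonneg hα.le ht, abs_of_nonneg ht]

lemma pred_tmod (hα : 0 < α) (hα1 : α ≤ 1)
    (hfnn : ∀ p, 0 ≤ f p)
    (hmon : ∀ u, Monotone fun t : ℝ => f (u, t) * Real.exp (α * t))
    (hant : ∀ u, Antitone fun t : ℝ => f (u, t) * Real.exp ((α - 1) * t))
    (u : ↥(Sp d)) {s t : ℝ} (hst : s ≤ t) :
    |f (u, t) - f (u, s)| ≤ f (u, s) * (Real.exp (t - s) - 1) := by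
  have hx : 0 ≤ t - s := sub_nonneg.2 hst
  have h1 : f (u, s) * Real.exp (α * s - α * t) ≤ f (u, t) := exp_shift' (hmon u hst)
  have h2 : f (u, t) * Real.exp ((α - 1) * t - (α - 1) * s) ≤ f (u, s) := exp_shift' (hant u hst)
  have hfs := hfnn (u, s)
  rw [abs_sub_le_iff]
  constructor
  · -- f(u,t) - f(u,s) ≤ f(u,s)(exp(t-s)-1)
    have h3 : f (u, t) ≤ f (u, s) * Real.exp (-((α - 1) * t - (α - 1) * s)) := exp_shift h2
    have h4 : Real.exp (-((α - 1) * t - (α - 1) * s)) ≤ Real.exp (t - s) :=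
      Real.exp_le_exp.2 (by nlinarith [mul_nonneg hα.le hx])
    nlinarith [mul_le_mul_of_nonneg_left h4 hfs]
  · -- f(u,s) - f(u,t) ≤ f(u,s)(exp(t-s)-1)
    have h5 : 1 - Real.exp (α * s - α * t) ≤ Real.exp (t - s) - 1 := by
      nlinarith [Real.add_one_le_exp (α * s - α * t), Real.add_one_le_exp (t - s),
        mul_nonneg (show (0:ℝ) ≤ 1 - α by linarith) hx]
    nlinarith [mul_le_mul_of_nonneg_left h5 hfs]



lemma pred_umod (hα : 0 < α) (hα1 : α ≤ 1) (hK : 0 < K)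
    (hh₀ : 0 < h₀) (hH : ∀ u, h₀ ≤ H u)
    (hfnn : ∀ p, 0 ≤ f p)
    (hfK : ∀ u, f (u, 0) * H u ≤ K)
    (hmon : ∀ u, Monotone fun t : ℝ => f (u, t) * Real.exp (α * t))
    (hant : ∀ u, Antitone fun t : ℝ => f (u, t) * Real.exp ((α - 1) * t))
    (hhol : ∀ (t : ℝ) (u w : ↥(Sp d)),
      |f (u, t) * Real.exp (α * t) * H u - f (w, t) * Real.exp (α * t) * H w|
        ≤ max 1 (Real.exp t) * K * (enorm d ((u : Vec d) - (w : Vec d))) ^ α)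
    (t : ℝ) (u w : ↥(Sp d)) :
    |f (u, t) - f (w, t)| ≤ (K / h₀ * Real.exp |t|) * (enorm d ((u : Vec d) - (w : Vec d))) ^ α
      + (K / h₀ * Real.exp |t| / h₀) * |H w - H u| := by
  set R := (enorm d ((u : Vec d) - (w : Vec d))) ^ α with hRdef
  have hRnn : 0 ≤ R := Real.rpow_nonneg (Real.sqrt_nonneg _) _
  set c := K / h₀ * Real.exp |t| with hcdef
  have hKc : c * h₀ = K * Real.exp |t| := by
    rw [hcdef, mul_right_comm, div_mul_cancel₀ _ hh₀.ne']
  -- step 1 : |f(u,t)H u - f(w,t)H w| ≤ exp|t| * (K * R)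
  have hstep : |f (u, t) * H u - f (w, t) * H w| ≤ Real.exp |t| * (K * R) := by
    have h1 := hhol t u w
    have h2 : (f (u, t) * H u - f (w, t) * H w) * Real.exp (α * t)
        = f (u, t) * Real.exp (α * t) * H u - f (w, t) * Real.exp (α * t) * H w := by ring
    have h4 : |f (u, t) * H u - f (w, t) * H w| * Real.exp (α * t)
        ≤ max 1 (Real.exp t) * K * R := by
      rw [← abs_of_pos (Real.exp_pos (α * t)), ← abs_mul, h2]
      exact h1
    have h5 := exp_shift h4
    calc |f (u, t) * H u - f (w, t) * H w|
        ≤ max 1 (Real.exp t) * K * R * Real.exp (-(α * t)) := h5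
      _ = (max 1 (Real.exp t) * Real.exp (-(α * t))) * (K * R) := by ring
      _ ≤ Real.exp |t| * (K * R) :=
          mul_le_mul_of_nonneg_right (exp_aux hα hα1 t) (mul_nonneg hK.le hRnn)
  have hb : f (w, t) ≤ c := pred_bound hα hα1 hh₀ hH hfnn hfK hmon hant w t
  have hu : 0 < H u := lt_of_lt_of_le hh₀ (hH u)
  have e1 : |f (u, t) - f (w, t)| * h₀ ≤ |f (u, t) - f (w, t)| * H u :=
    mul_le_mul_of_nonneg_left (hH u) (abs_nonneg _)
  have e2 : |f (u, t) - f (w, t)| * H u = |f (u, t) * H u - f (w, t) * H u| := by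
    have h7 : |f (u, t) - f (w, t)| * H u = |(f (u, t) - f (w, t)) * H u| := by
      rw [abs_mul, abs_of_pos hu]
    rw [h7, sub_mul]
  have e3 : |f (u, t) * H u - f (w, t) * H u|
      ≤ |f (u, t) * H u - f (w, t) * H w| + f (w, t) * |H w - H u| := by
    have h6 : f (u, t) * H u - f (w, t) * H u
        = (f (u, t) * H u - f (w, t) * H w) + f (w, t) * (H w - H u) := by ring
    rw [h6]
    refine (abs_add_le _ _).trans ?_
    rw [abs_mul, abs_of_nonneg (hfnn (w, t))]
  have e4 : f (w, t) * |H w - H u| ≤ c * |H w - H u| :=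
    mul_le_mul_of_nonneg_right hb (abs_nonneg _)
  have e6 : (c * R + c / h₀ * |H w - H u|) * h₀ = c * h₀ * R + c * |H w - H u| := by
    field_simp
  have hmain : |f (u, t) - f (w, t)| * h₀ ≤ (c * R + c / h₀ * |H w - H u|) * h₀ := by
    rw [e6, hKc]
    calc |f (u, t) - f (w, t)| * h₀ ≤ |f (u, t) * H u - f (w, t) * H u| := e1.trans_eq e2
      _ ≤ |f (u, t) * H u - f (w, t) * H w| + f (w, t) * |H w - H u| := e3
      _ ≤ Real.exp |t| * (K * R) + c * |H w - H u| := add_le_add hstep e4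
      _ = K * Real.exp |t| * R + c * |H w - H u| := by ring
  exact le_of_mul_le_mul_right hmain hh₀

lemma pred_key (hα : 0 < α) (hα1 : α ≤ 1) (hK : 0 < K)
    (hh₀ : 0 < h₀) (hH : ∀ u, h₀ ≤ H u)
    (hfnn : ∀ p, 0 ≤ f p)
    (hfK : ∀ u, f (u, 0) * H u ≤ K)
    (hmon : ∀ u, Monotone fun t : ℝ => f (u, t) * Real.exp (α * t))
    (hant : ∀ u, Antitone fun t : ℝ => f (u, t) * Real.exp ((α - 1) * t))
    (hhol : ∀ (t : ℝ) (u w : ↥(Sp d)),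
      |f (u, t) * Real.exp (α * t) * H u - f (w, t) * Real.exp (α * t) * H w|
        ≤ max 1 (Real.exp t) * K * (enorm d ((u : Vec d) - (w : Vec d))) ^ α)
    (u₀ : ↥(Sp d)) (t₀ : ℝ) (u : ↥(Sp d)) (t : ℝ) (ht : |t - t₀| ≤ 1) :
    |f (u, t) - f (u₀, t₀)| ≤ (K / h₀ * Real.exp (|t₀| + 1)) *
      ((enorm d ((u : Vec d) - (u₀ : Vec d))) ^ α + |H u - H u₀| / h₀
        + (Real.exp |t - t₀| - 1)) := by
  set M := K / h₀ * Real.exp (|t₀| + 1) with hMdef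
  have hKh : 0 ≤ K / h₀ := div_nonneg hK.le hh₀.le
  have habs : |t| ≤ |t₀| + 1 := by
    have := abs_sub_abs_le_abs_sub t t₀
    linarith
  have hMc : K / h₀ * Real.exp |t| ≤ M :=
    mul_le_mul_of_nonneg_left (Real.exp_le_exp.2 habs) hKh
  set R := (enorm d ((u : Vec d) - (u₀ : Vec d))) ^ α with hRdef
  have hRnn : 0 ≤ R := Real.rpow_nonneg (Real.sqrt_nonneg _) _
  -- term 1
  have T1 : |f (u, t) - f (u₀, t)| ≤ M * R + M / h₀ * |H u - H u₀| := by
    have h := pred_umod hα hα1 hK hh₀ hH hfnn hfK hmon hant hhol t u u₀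
    have h2 : (K / h₀ * Real.exp |t|) * R ≤ M * R := mul_le_mul_of_nonneg_right hMc hRnn
    have h3 : (K / h₀ * Real.exp |t| / h₀) * |H u₀ - H u| ≤ M / h₀ * |H u - H u₀| := by
      rw [abs_sub_comm (H u₀) (H u)]
      have : K / h₀ * Real.exp |t| / h₀ ≤ M / h₀ := by gcongr
      exact mul_le_mul_of_nonneg_right this (abs_nonneg _)
    linarith
  -- term 2
  have T2 : |f (u₀, t) - f (u₀, t₀)| ≤ M * (Real.exp |t - t₀| - 1) := by
    rcases le_total t t₀ with h | h
    · have htm := pred_tmod hα hα1 hfnn hmon hant u₀ h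
      have hb := pred_bound hα hα1 hh₀ hH hfnn hfK hmon hant u₀ t
      have habs2 : |t - t₀| = t₀ - t := by rw [abs_of_nonpos (by linarith)]; ring
      have hexp1 : (0:ℝ) ≤ Real.exp (t₀ - t) - 1 := by
        have := Real.one_le_exp (show (0:ℝ) ≤ t₀ - t by linarith)
        linarith
      rw [abs_sub_comm, habs2]
      calc |f (u₀, t₀) - f (u₀, t)| ≤ f (u₀, t) * (Real.exp (t₀ - t) - 1) := htm
        _ ≤ M * (Real.exp (t₀ - t) - 1) :=
            mul_le_mul_of_nonneg_right (hb.trans hMc) hexp1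
    · have htm := pred_tmod hα hα1 hfnn hmon hant u₀ h
      have hb := pred_bound hα hα1 hh₀ hH hfnn hfK hmon hant u₀ t₀
      have habs2 : |t - t₀| = t - t₀ := abs_of_nonneg (by linarith)
      have hexp1 : (0:ℝ) ≤ Real.exp (t - t₀) - 1 := by
        have := Real.one_le_exp (show (0:ℝ) ≤ t - t₀ by linarith)
        linarith
      have hMc0 : K / h₀ * Real.exp |t₀| ≤ M :=
        mul_le_mul_of_nonneg_left (Real.exp_le_exp.2 (by linarith [abs_nonneg (t - t₀)])) hKh
      rw [habs2]
      calc |f (u₀, t) - f (u₀, t₀)| ≤ f (u₀, t₀) * (Real.exp (t - t₀) - 1) := htm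
        _ ≤ M * (Real.exp (t - t₀) - 1) :=
            mul_le_mul_of_nonneg_right (hb.trans hMc0) hexp1
  have tri : |f (u, t) - f (u₀, t₀)| ≤ |f (u, t) - f (u₀, t)| + |f (u₀, t) - f (u₀, t₀)| :=
    abs_sub_le _ _ _
  have expand : M * (R + |H u - H u₀| / h₀ + (Real.exp |t - t₀| - 1))
      = M * R + M / h₀ * |H u - H u₀| + M * (Real.exp |t - t₀| - 1) := by ring
  rw [expand]
  linarith


lemma tendsto_phi (hα : 0 < α) (hh₀ : 0 < h₀) (hHc : Continuous H) (M : ℝ)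
    (u₀ : ↥(Sp d)) (t₀ : ℝ) :
    Tendsto (fun p : ↥(Sp d) × ℝ => M * ((enorm d ((p.1 : Vec d) - (u₀ : Vec d))) ^ α
        + |H p.1 - H u₀| / h₀ + (Real.exp |p.2 - t₀| - 1))) (nhds (u₀, t₀)) (nhds 0) := by
  have c1 : Tendsto (fun p : ↥(Sp d) × ℝ => enorm d ((p.1 : Vec d) - (u₀ : Vec d)))
      (nhds (u₀, t₀)) (nhds 0) := by
    have hco : Continuous fun p : ↥(Sp d) × ℝ => enorm d ((p.1 : Vec d) - (u₀ : Vec d)) :=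
      continuous_enorm.comp ((continuous_subtype_val.comp continuous_fst).sub continuous_const)
    have h0 : enorm d (0 : Vec d) = 0 := by
      simp [enorm]
    simpa [h0] using hco.tendsto (u₀, t₀)
  have c1' : Tendsto (fun p : ↥(Sp d) × ℝ => (enorm d ((p.1 : Vec d) - (u₀ : Vec d))) ^ α)
      (nhds (u₀, t₀)) (nhds 0) := by
    have hc : ContinuousAt (fun x : ℝ => x ^ α) 0 :=
      Real.continuousAt_rpow_const 0 α (Or.inr hα.le)
    have := hc.tendsto.comp c1
    simpa [Function.comp_def, Real.zero_rpow hα.ne'] using this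
  have c2 : Tendsto (fun p : ↥(Sp d) × ℝ => |H p.1 - H u₀| / h₀) (nhds (u₀, t₀)) (nhds 0) := by
    have hco : Continuous fun p : ↥(Sp d) × ℝ => |H p.1 - H u₀| / h₀ :=
      (((hHc.comp continuous_fst).sub continuous_const).abs).div_const _
    simpa using hco.tendsto (u₀, t₀)
  have c3 : Tendsto (fun p : ↥(Sp d) × ℝ => Real.exp |p.2 - t₀| - 1) (nhds (u₀, t₀)) (nhds 0) := by
    have hco : Continuous fun p : ↥(Sp d) × ℝ => Real.exp |p.2 - t₀| - 1 :=
      (Real.continuous_exp.comp (continuous_snd.sub continuous_const).abs).sub continuous_const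
    simpa using hco.tendsto (u₀, t₀)
  have := ((c1'.add c2).add c3).const_mul M
  simpa using this

lemma eventually_near (u₀ : ↥(Sp d)) (t₀ : ℝ) :
    ∀ᶠ p : ↥(Sp d) × ℝ in nhds (u₀, t₀), |p.2 - t₀| ≤ 1 := by
  have hco : Continuous fun p : ↥(Sp d) × ℝ => |p.2 - t₀| :=
    (continuous_snd.sub continuous_const).abs
  have h := hco.tendsto (u₀, t₀)
  simp only [sub_self, abs_zero] at h
  exact (h.eventually_lt_const one_pos).mono fun _ h => h.le

lemma pred_continuous (hα : 0 < α) (hα1 : α ≤ 1) (hK : 0 < K)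
    (hh₀ : 0 < h₀) (hH : ∀ u, h₀ ≤ H u) (hHc : Continuous H)
    (hfnn : ∀ p, 0 ≤ f p)
    (hfK : ∀ u, f (u, 0) * H u ≤ K)
    (hmon : ∀ u, Monotone fun t : ℝ => f (u, t) * Real.exp (α * t))
    (hant : ∀ u, Antitone fun t : ℝ => f (u, t) * Real.exp ((α - 1) * t))
    (hhol : ∀ (t : ℝ) (u w : ↥(Sp d)),
      |f (u, t) * Real.exp (α * t) * H u - f (w, t) * Real.exp (α * t) * H w|
        ≤ max 1 (Real.exp t) * K * (enorm d ((u : Vec d) - (w : Vec d))) ^ α) :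
    Continuous f := by
  rw [continuous_iff_continuousAt]
  rintro ⟨u₀, t₀⟩
  have key : Tendsto (fun p => |f p - f (u₀, t₀)|) (nhds (u₀, t₀)) (nhds 0) := by
    refine squeeze_zero' (Eventually.of_forall fun p => abs_nonneg _) ?_
      (tendsto_phi hα hh₀ hHc (K / h₀ * Real.exp (|t₀| + 1)) u₀ t₀)
    filter_upwards [eventually_near u₀ t₀] with p hp
    have hkey := pred_key hα hα1 hK hh₀ hH hfnn hfK hmon hant hhol u₀ t₀ p.1 p.2 hp
    simpa using hkey
  rw [ContinuousAt, tendsto_iff_dist_tendsto_zero]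
  simpa [Real.dist_eq] using key


lemma isClosed_J14 (d : ℕ) (α K : ℝ) (H : ↥(Sp d) → ℝ) :
    IsClosed {f : (↥(Sp d) × ℝ) → ℝ | (∀ p, 0 ≤ f p) ∧ (∀ u, f (u, 0) * H u ≤ K) ∧
      (∀ u, Monotone fun t : ℝ => f (u, t) * Real.exp (α * t)) ∧
      (∀ u, Antitone fun t : ℝ => f (u, t) * Real.exp ((α - 1) * t)) ∧
      ∀ (t : ℝ) (u w : ↥(Sp d)),
        |f (u, t) * Real.exp (α * t) * H u - f (w, t) * Real.exp (α * t) * H w|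
          ≤ max 1 (Real.exp t) * K * (enorm d ((u : Vec d) - (w : Vec d))) ^ α} := by
  have h1 : IsClosed {f : (↥(Sp d) × ℝ) → ℝ | ∀ p, 0 ≤ f p} := by
    rw [Set.setOf_forall]
    exact isClosed_iInter fun p => isClosed_le continuous_const (continuous_apply p)
  have h2 : IsClosed {f : (↥(Sp d) × ℝ) → ℝ | ∀ u : ↥(Sp d), f (u, 0) * H u ≤ K} := by
    rw [Set.setOf_forall]
    exact isClosed_iInter fun u =>
      isClosed_le ((continuous_apply (u, (0:ℝ))).mul continuous_const) continuous_const
  have h3 : IsClosed {f : (↥(Sp d) × ℝ) → ℝ |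
      ∀ u : ↥(Sp d), Monotone fun t : ℝ => f (u, t) * Real.exp (α * t)} := by
    have he : {f : (↥(Sp d) × ℝ) → ℝ |
        ∀ u : ↥(Sp d), Monotone fun t : ℝ => f (u, t) * Real.exp (α * t)}
        = ⋂ (u : ↥(Sp d)) (s : ℝ) (t : ℝ) (_ : s ≤ t),
          {f | f (u, s) * Real.exp (α * s) ≤ f (u, t) * Real.exp (α * t)} := by
      ext f
      simp only [Set.mem_iInter, Set.mem_setOf_eq]
      exact ⟨fun h u s t hst => h u hst, fun h u a b hab => h u a b hab⟩
    rw [he]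
    exact isClosed_iInter fun u => isClosed_iInter fun s => isClosed_iInter fun t =>
      isClosed_iInter fun _ => isClosed_le ((continuous_apply _).mul continuous_const)
        ((continuous_apply _).mul continuous_const)
  have h4 : IsClosed {f : (↥(Sp d) × ℝ) → ℝ |
      ∀ u : ↥(Sp d), Antitone fun t : ℝ => f (u, t) * Real.exp ((α - 1) * t)} := by
    have he : {f : (↥(Sp d) × ℝ) → ℝ |
        ∀ u : ↥(Sp d), Antitone fun t : ℝ => f (u, t) * Real.exp ((α - 1) * t)}
        = ⋂ (u : ↥(Sp d)) (s : ℝ) (t : ℝ) (_ : s ≤ t),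
          {f | f (u, t) * Real.exp ((α - 1) * t) ≤ f (u, s) * Real.exp ((α - 1) * s)} := by
      ext f
      simp only [Set.mem_iInter, Set.mem_setOf_eq]
      exact ⟨fun h u s t hst => h u hst, fun h u a b hab => h u a b hab⟩
    rw [he]
    exact isClosed_iInter fun u => isClosed_iInter fun s => isClosed_iInter fun t =>
      isClosed_iInter fun _ => isClosed_le ((continuous_apply _).mul continuous_const)
        ((continuous_apply _).mul continuous_const)
  have h5 : IsClosed {f : (↥(Sp d) × ℝ) → ℝ | ∀ (t : ℝ) (u w : ↥(Sp d)),
      |f (u, t) * Real.exp (α * t) * H u - f (w, t) * Real.exp (α * t) * H w|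
        ≤ max 1 (Real.exp t) * K * (enorm d ((u : Vec d) - (w : Vec d))) ^ α} := by
    have he : {f : (↥(Sp d) × ℝ) → ℝ | ∀ (t : ℝ) (u w : ↥(Sp d)),
        |f (u, t) * Real.exp (α * t) * H u - f (w, t) * Real.exp (α * t) * H w|
          ≤ max 1 (Real.exp t) * K * (enorm d ((u : Vec d) - (w : Vec d))) ^ α}
        = ⋂ (t : ℝ) (u : ↥(Sp d)) (w : ↥(Sp d)),
          {f | |f (u, t) * Real.exp (α * t) * H u - f (w, t) * Real.exp (α * t) * H w|
            ≤ max 1 (Real.exp t) * K * (enorm d ((u : Vec d) - (w : Vec d))) ^ α} := by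
      ext f
      simp only [Set.mem_iInter, Set.mem_setOf_eq]
    rw [he]
    exact isClosed_iInter fun t => isClosed_iInter fun u => isClosed_iInter fun w =>
      isClosed_le ((((continuous_apply (u, t)).mul continuous_const).mul continuous_const).sub
        (((continuous_apply (w, t)).mul continuous_const).mul continuous_const)).abs
        continuous_const
  exact h1.inter (h2.inter (h3.inter (h4.inter h5)))



end Lemma86

/-- Lemma 8.6: the set `𝒥` of continuous functions `g : S₊ × ℝ → [0,∞)`
satisfying (1)–(4) is a compact subset of `C(S₊ × ℝ)` with the topology of uniform
convergence on compact sets (the compact-open topology). -/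
theorem statement14 {d : ℕ} (hd : 1 ≤ d)
    (α K : ℝ) (hα : 0 < α) (hα1 : α ≤ 1) (hK : 0 < K)
    (H : Sp d → ℝ) (hHc : Continuous H) (hHpos : ∀ u, 0 < H u) :
    IsCompact {g : C(↥(Sp d) × ℝ, ℝ) |
      (∀ p, 0 ≤ g p) ∧
      (∀ u : ↥(Sp d), g (u, 0) * H u ≤ K) ∧
      (∀ u : ↥(Sp d), Monotone fun t : ℝ => g (u, t) * Real.exp (α * t)) ∧
      (∀ u : ↥(Sp d), Antitone fun t : ℝ => g (u, t) * Real.exp ((α - 1) * t)) ∧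
      ∀ (t : ℝ) (u w : ↥(Sp d)),
        |g (u, t) * Real.exp (α * t) * H u - g (w, t) * Real.exp (α * t) * H w|
          ≤ max 1 (Real.exp t) * K * (enorm d ((u : Vec d) - (w : Vec d))) ^ α} := by
  haveI : Nonempty ↥(Sp d) := (Sp_nonempty hd).to_subtype
  haveI : CompactSpace ↥(Sp d) := isCompact_iff_compactSpace.mp isCompact_Sp
  obtain ⟨u₀m, -, hmin⟩ := isCompact_univ.exists_isMinOn univ_nonempty hHc.continuousOn
  set h₀ := H u₀m with hh₀def
  have hh₀ : 0 < h₀ := hHpos u₀m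
  have hH : ∀ u, h₀ ≤ H u := fun u => isMinOn_iff.mp hmin u (mem_univ u)
  apply ArzelaAscoli.isCompact_of_equicontinuous
  · -- compactness of the image in the product topology
    have himg : ContinuousMap.toFun '' {g : C(↥(Sp d) × ℝ, ℝ) |
        (∀ p, 0 ≤ g p) ∧
        (∀ u : ↥(Sp d), g (u, 0) * H u ≤ K) ∧
        (∀ u : ↥(Sp d), Monotone fun t : ℝ => g (u, t) * Real.exp (α * t)) ∧
        (∀ u : ↥(Sp d), Antitone fun t : ℝ => g (u, t) * Real.exp ((α - 1) * t)) ∧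
        ∀ (t : ℝ) (u w : ↥(Sp d)),
          |g (u, t) * Real.exp (α * t) * H u - g (w, t) * Real.exp (α * t) * H w|
            ≤ max 1 (Real.exp t) * K * (enorm d ((u : Vec d) - (w : Vec d))) ^ α}
        = {f : (↥(Sp d) × ℝ) → ℝ | (∀ p, 0 ≤ f p) ∧ (∀ u, f (u, 0) * H u ≤ K) ∧
          (∀ u, Monotone fun t : ℝ => f (u, t) * Real.exp (α * t)) ∧
          (∀ u, Antitone fun t : ℝ => f (u, t) * Real.exp ((α - 1) * t)) ∧
          ∀ (t : ℝ) (u w : ↥(Sp d)),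
            |f (u, t) * Real.exp (α * t) * H u - f (w, t) * Real.exp (α * t) * H w|
              ≤ max 1 (Real.exp t) * K * (enorm d ((u : Vec d) - (w : Vec d))) ^ α} := by
      ext f
      constructor
      · rintro ⟨g, hg, rfl⟩
        exact hg
      · rintro ⟨hfnn, hfK, hmon, hant, hhol⟩
        exact ⟨⟨f, pred_continuous hα hα1 hK hh₀ hH hHc hfnn hfK hmon hant hhol⟩,
          ⟨hfnn, hfK, hmon, hant, hhol⟩, rfl⟩
    rw [himg]
    refine IsCompact.of_isClosed_subset
      (isCompact_univ_pi fun p : ↥(Sp d) × ℝ => isCompact_Icc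
        (a := (0:ℝ)) (b := K / h₀ * Real.exp |p.2|))
      (isClosed_J14 d α K H) ?_
    rintro f ⟨hfnn, hfK, hmon, hant, hhol⟩
    rw [Set.mem_univ_pi]
    intro p
    exact ⟨hfnn p, by
      have := pred_bound hα hα1 hh₀ hH hfnn hfK hmon hant p.1 p.2
      simpa using this⟩
  · -- equicontinuity
    rintro ⟨u₀, t₀⟩
    rw [Metric.equicontinuousAt_iff_right]
    intro ε hε
    have hφ := tendsto_phi hα hh₀ hHc (K / h₀ * Real.exp (|t₀| + 1)) u₀ t₀
    filter_upwards [hφ.eventually (gt_mem_nhds hε), eventually_near u₀ t₀] with p hp1 hp2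
    rintro ⟨g, hfnn, hfK, hmon, hant, hhol⟩
    have hkey := pred_key hα hα1 hK hh₀ hH hfnn hfK hmon hant hhol u₀ t₀ p.1 p.2 hp2
    have : dist (g (u₀, t₀)) (g p) = |g p - g (u₀, t₀)| := by
      rw [Real.dist_eq, abs_sub_comm]
    rw [this]
    calc |g p - g (u₀, t₀)| ≤ _ := by simpa using hkey
      _ < ε := hp1


end MST
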